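/- Let n ≥ 2. With notation as in the classification of virtual line elements, the set P of virtual line elements forms a group under multiplication in A, and the map (ℤ/nℤ)^n × ℂ^n → P sending (f_0,...,f_{n-1}; β^0,...,β^{n-1}) to 1 + Σ_{q=0}^{n-1} Σ_{l=1}^{n-1} (ζ^{l f_q} - 1) u_l^q + Σ_{q=0}^{n-1} β^q u_0^q is a group isomorphism, where the group structure on the source is componentwise addition. -/

import Mathlib

open Finset

section Stmt13Aux

variable {n : ℕ} {A : Type*} [CommRing A] [Algebra ℂ A]

def stmt13E (u : Fin n → Fin n → A) (c : ℂ) (d : Fin n × Fin n → ℂ) : A :=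
  c • (1 : A) + ∑ p : Fin n × Fin n, d p • u p.1 p.2

variable {u : Fin n → Fin n → A}

lemma stmt13_hu (hpos : 0 < n)
    (hmul : ∀ (l q l' q' : Fin n), (l.1 ≠ 0 ∨ l'.1 ≠ 0) →
      u l q * u l' q' = if l = l' ∧ q = q' then u l q else 0)
    (h0 : ∀ q q' : Fin n, u ⟨0, hpos⟩ q * u ⟨0, hpos⟩ q' = 0)
    (p p' : Fin n × Fin n) :
    u p.1 p.2 * u p'.1 p'.2 = if p = p' ∧ p.1.1 ≠ 0 then u p.1 p.2 else 0 := by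
  by_cases hz : p.1.1 = 0 ∧ p'.1.1 = 0
  · have h1 : p.1 = ⟨0, hpos⟩ := Fin.ext hz.1
    have h2 : p'.1 = ⟨0, hpos⟩ := Fin.ext hz.2
    rw [h1, h2, h0]
    simp [hz.1]
  · rw [not_and_or] at hz
    rw [hmul _ _ _ _ hz]
    by_cases hp : p = p'
    · subst hp
      have : p.1.1 ≠ 0 := by rcases hz with h | h <;> exact h
      simp [this]
    · have : ¬(p.1 = p'.1 ∧ p.2 = p'.2) := by
        intro h; exact hp (Prod.ext h.1 h.2)
      simp [this, hp]

lemma stmt13E_inj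
    (hind : LinearIndependent ℂ
      (fun p : Option (Fin n × Fin n) => p.elim (1 : A) (fun lq => u lq.1 lq.2)))
    {c c' : ℂ} {d d' : Fin n × Fin n → ℂ}
    (h : stmt13E u c d = stmt13E u c' d') : c = c' ∧ d = d' := by
  rw [Fintype.linearIndependent_iff] at hind
  have key := hind (fun o => o.elim (c - c') (fun p => d p - d' p)) ?_
  · refine ⟨by have := key none; simpa [sub_eq_zero] using this, funext fun p => ?_⟩
    have := key (some p); simpa [sub_eq_zero] using this
  · rw [Fintype.sum_option]
    simp only [Option.elim]
    have : ∀ p : Fin n × Fin n, (d p - d' p) • u p.1 p.2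
        = d p • u p.1 p.2 - d' p • u p.1 p.2 := fun p => sub_smul _ _ _
    rw [Finset.sum_congr rfl (fun p _ => this p), Finset.sum_sub_distrib, sub_smul]
    have h' : stmt13E u c d - stmt13E u c' d' = 0 := sub_eq_zero.2 h
    unfold stmt13E at h'
    linear_combination (norm := abel) h'

lemma stmt13E_mul (hpos : 0 < n)
    (hmul : ∀ (l q l' q' : Fin n), (l.1 ≠ 0 ∨ l'.1 ≠ 0) →
      u l q * u l' q' = if l = l' ∧ q = q' then u l q else 0)
    (h0 : ∀ q q' : Fin n, u ⟨0, hpos⟩ q * u ⟨0, hpos⟩ q' = 0)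
    (c c' : ℂ) (d d' : Fin n × Fin n → ℂ) :
    stmt13E u c d * stmt13E u c' d' =
      stmt13E u (c * c')
        (fun p => c * d' p + c' * d p + if p.1.1 ≠ 0 then d p * d' p else 0) := by
  have hu := stmt13_hu hpos hmul h0
  unfold stmt13E
  rw [add_mul, mul_add, mul_add]
  rw [Finset.sum_mul_sum]
  have hSS : ∑ p : Fin n × Fin n, ∑ p' : Fin n × Fin n,
      (d p • u p.1 p.2) * (d' p' • u p'.1 p'.2)
      = ∑ p : Fin n × Fin n, (if p.1.1 ≠ 0 then d p * d' p else 0) • u p.1 p.2 := by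
    refine Finset.sum_congr rfl (fun p _ => ?_)
    have : ∀ p' : Fin n × Fin n, (d p • u p.1 p.2) * (d' p' • u p'.1 p'.2)
        = if p = p' then (if p.1.1 ≠ 0 then d p * d' p else 0) • u p.1 p.2 else 0 := by
      intro p'
      rw [smul_mul_smul_comm, hu p p']
      by_cases hp : p = p'
      · subst hp; by_cases hz : p.1.1 ≠ 0 <;> simp [hz]
      · simp [hp]
    rw [Finset.sum_congr rfl (fun p' _ => this p'), Finset.sum_ite_eq]
    simp
  rw [hSS]
  have h1 : (c • (1:A)) * (c' • (1:A)) = (c * c') • (1:A) := by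
    rw [smul_mul_smul_comm, one_mul]
  have h2 : (c • (1:A)) * (∑ p : Fin n × Fin n, d' p • u p.1 p.2)
      = ∑ p : Fin n × Fin n, (c * d' p) • u p.1 p.2 := by
    rw [Finset.mul_sum]
    exact Finset.sum_congr rfl (fun p _ => by rw [smul_mul_smul_comm, one_mul])
  have h3 : (∑ p : Fin n × Fin n, d p • u p.1 p.2) * (c' • (1:A))
      = ∑ p : Fin n × Fin n, (c' * d p) • u p.1 p.2 := by
    rw [Finset.sum_mul]
    exact Finset.sum_congr rfl (fun p _ => by
      rw [smul_mul_smul_comm, mul_one, mul_comm])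
  rw [h1, h2, h3]
  have : ∀ p : Fin n × Fin n,
      (c * d' p + c' * d p + if p.1.1 ≠ 0 then d p * d' p else 0) • u p.1 p.2
      = (c * d' p) • u p.1 p.2 + (c' * d p) • u p.1 p.2
        + (if p.1.1 ≠ 0 then d p * d' p else 0) • u p.1 p.2 := by
    intro p; rw [add_smul, add_smul]
  rw [Finset.sum_congr rfl (fun p _ => this p), Finset.sum_add_distrib,
    Finset.sum_add_distrib]
  abel

lemma stmt13E_pow (hpos : 0 < n)
    (hmul : ∀ (l q l' q' : Fin n), (l.1 ≠ 0 ∨ l'.1 ≠ 0) →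
      u l q * u l' q' = if l = l' ∧ q = q' then u l q else 0)
    (h0 : ∀ q q' : Fin n, u ⟨0, hpos⟩ q * u ⟨0, hpos⟩ q' = 0)
    (c : ℂ) (d : Fin n × Fin n → ℂ) (k : ℕ) :
    (stmt13E u c d) ^ k =
      stmt13E u (c ^ k)
        (fun p => if p.1.1 = 0 then (k : ℂ) * c ^ (k - 1) * d p
          else (c + d p) ^ k - c ^ k) := by
  induction k with
  | zero =>
    simp only [pow_zero, Nat.cast_zero, zero_mul, sub_self]
    unfold stmt13E
    simp
  | succ k ih =>
    rw [pow_succ, ih, stmt13E_mul hpos hmul h0]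
    congr 1
    funext p
    by_cases hz : p.1.1 = 0
    · simp only [hz, if_true, if_neg (by simp : ¬(0 ≠ 0))]
      have hc : (k : ℂ) * c ^ (k - 1) * c = (k : ℂ) * c ^ k := by
        cases k with
        | zero => simp
        | succ m => rw [Nat.add_sub_cancel, pow_succ]; ring
      push_cast
      calc c ^ k * d p + c * ((k : ℂ) * c ^ (k - 1) * d p) + 0
          = c ^ k * d p + ((k : ℂ) * c ^ (k - 1) * c) * d p := by ring
        _ = ((k : ℂ) + 1) * c ^ (k + 1 - 1) * d p := by
            rw [hc, Nat.add_sub_cancel]; ring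
    · simp only [hz, if_false, if_pos hz]
      rw [pow_succ, pow_succ]
      ring
lemma stmt13E_psi (hpos : 0 < n)
    (ψ : ℕ → (A →ₗ[ℂ] A))
    (hψ1 : ∀ k, ψ k 1 = 1)
    (hψ0 : ∀ k, ∀ q : Fin n, ψ k (u ⟨0, hpos⟩ q) = (k : ℂ) • u ⟨0, hpos⟩ q)
    (hψl : ∀ k, ∀ l q : Fin n, l.1 ≠ 0 →
      ψ k (u l q) = ∑ s ∈ Finset.univ.filter (fun s : Fin n => k * s.1 % n = l.1), u s q)
    (k : ℕ) (c : ℂ) (d : Fin n × Fin n → ℂ) :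
    ψ k (stmt13E u c d) = stmt13E u c
      (fun p => if p.1.1 = 0 then (k : ℂ) * d p
        else if h : (k * p.1.1) % n ≠ 0 then d (⟨(k * p.1.1) % n, Nat.mod_lt _ hpos⟩, p.2)
        else 0) := by
  unfold stmt13E
  rw [map_add, map_smul, hψ1, map_sum]
  congr 1
  simp only [map_smul]
  rw [Fintype.sum_prod_type_right, Fintype.sum_prod_type_right]
  refine Finset.sum_congr rfl (fun q _ => ?_)
  dsimp only
  -- LHS over l, RHS over s for fixed q
  have hG : ∀ l : Fin n, d (l, q) • ψ k (u l q)
      = if l.1 = 0 then ((k : ℂ) * d (l, q)) • u l q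
        else ∑ s ∈ univ.filter (fun s : Fin n => k * s.1 % n = l.1), d (l, q) • u s q := by
    intro l
    by_cases hl : l.1 = 0
    · have : l = ⟨0, hpos⟩ := Fin.ext hl
      subst this
      rw [hψ0, if_pos rfl, smul_smul, mul_comm]
    · rw [hψl _ _ _ hl, if_neg hl, Finset.smul_sum]
  rw [Finset.sum_congr rfl (fun l _ => hG l), Finset.sum_ite]
  have hset0 : univ.filter (fun l : Fin n => l.1 = 0) = {(⟨0, hpos⟩ : Fin n)} := by
    ext l; simp [Fin.ext_iff]
  -- transform the double sum
  set E2 : Fin n → A := fun s =>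
    (if h : (k * s.1) % n ≠ 0 then d (⟨(k * s.1) % n, Nat.mod_lt _ hpos⟩, q) else 0) • u s q
    with hE2
  have hdouble : ∑ l ∈ univ.filter (fun l : Fin n => ¬ l.1 = 0),
      ∑ s ∈ univ.filter (fun s : Fin n => k * s.1 % n = l.1), d (l, q) • u s q
      = ∑ s : Fin n, E2 s := by
    rw [Finset.sum_congr rfl (fun l _ => Finset.sum_filter _ _)]
    rw [Finset.sum_comm]
    refine Finset.sum_congr rfl (fun s _ => ?_)
    by_cases hks : (k * s.1) % n ≠ 0
    · have hmem : (⟨(k * s.1) % n, Nat.mod_lt _ hpos⟩ : Fin n)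
          ∈ univ.filter (fun l : Fin n => ¬ l.1 = 0) := by simp [hks]
      have : ∀ l ∈ univ.filter (fun l : Fin n => ¬ l.1 = 0),
          (if k * s.1 % n = l.1 then d (l, q) • u s q else 0)
          = if (⟨(k * s.1) % n, Nat.mod_lt _ hpos⟩ : Fin n) = l
            then d (l, q) • u s q else 0 := by
        intro l _
        congr 1
        rw [eq_iff_iff, Fin.ext_iff]
      rw [Finset.sum_congr rfl this, Finset.sum_ite_eq, if_pos hmem]
      simp [hE2, hks]
    · push_neg at hks
      have : ∀ l ∈ univ.filter (fun l : Fin n => ¬ l.1 = 0),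
          (if k * s.1 % n = l.1 then d (l, q) • u s q else 0) = 0 := by
        intro l hl
        rw [Finset.mem_filter] at hl
        rw [if_neg]
        omega
      rw [Finset.sum_congr rfl this, Finset.sum_const_zero]
      simp [hE2, hks]
  rw [hset0, Finset.sum_singleton, hdouble]
  -- now RHS
  have hRHS : ∑ s : Fin n,
      (if s.1 = 0 then (k : ℂ) * d (s, q)
        else if h : (k * s.1) % n ≠ 0 then d (⟨(k * s.1) % n, Nat.mod_lt _ hpos⟩, q)
        else 0) • u s q
      = ((k : ℂ) * d (⟨0, hpos⟩, q)) • u ⟨0, hpos⟩ q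
        + ∑ s ∈ univ.filter (fun s : Fin n => ¬ s.1 = 0), E2 s := by
    have : ∀ s : Fin n,
        (if s.1 = 0 then (k : ℂ) * d (s, q)
          else if h : (k * s.1) % n ≠ 0 then d (⟨(k * s.1) % n, Nat.mod_lt _ hpos⟩, q)
          else 0) • u s q
        = if s.1 = 0 then ((k : ℂ) * d (s, q)) • u s q else E2 s := by
      intro s
      by_cases hs : s.1 = 0 <;> simp [hs, hE2]
    rw [Finset.sum_congr rfl (fun s _ => this s), Finset.sum_ite, hset0,
      Finset.sum_singleton]
  rw [hRHS]
  congr 1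
  rw [Finset.sum_filter]
  refine Finset.sum_congr rfl (fun s _ => ?_)
  by_cases hs : s.1 = 0
  · rw [if_neg (by omega)]
    have : (k * s.1) % n = 0 := by rw [hs, Nat.mul_zero, Nat.zero_mod]
    rw [hE2]
    simp only [this]
    rw [dif_neg (by omega), zero_smul]
  · rw [if_pos hs]

lemma stmt13E_mul_u0 (hpos : 0 < n)
    (hmul : ∀ (l q l' q' : Fin n), (l.1 ≠ 0 ∨ l'.1 ≠ 0) →
      u l q * u l' q' = if l = l' ∧ q = q' then u l q else 0)
    (h0 : ∀ q q' : Fin n, u ⟨0, hpos⟩ q * u ⟨0, hpos⟩ q' = 0)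
    (c : ℂ) (d : Fin n × Fin n → ℂ) (q : Fin n) :
    stmt13E u c d * u ⟨0, hpos⟩ q = c • u ⟨0, hpos⟩ q := by
  unfold stmt13E
  rw [add_mul, smul_mul_assoc, one_mul, Finset.sum_mul]
  have : ∀ p : Fin n × Fin n, (d p • u p.1 p.2) * u ⟨0, hpos⟩ q = 0 := by
    intro p
    rw [smul_mul_assoc]
    by_cases hp : p.1.1 = 0
    · have : p.1 = ⟨0, hpos⟩ := Fin.ext hp
      rw [this, h0, smul_zero]
    · rw [hmul _ _ _ _ (Or.inl hp), if_neg, smul_zero]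
      rintro ⟨h1, -⟩
      exact hp (by rw [h1])
  rw [Finset.sum_congr rfl (fun p _ => this p), Finset.sum_const_zero, add_zero]

lemma stmt13E_eq (hpos : 0 < n) (c : ℂ) (d : Fin n × Fin n → ℂ) :
    stmt13E u c d = c • (1 : A)
      + (∑ q : Fin n, ∑ l ∈ Finset.univ.filter (fun l : Fin n => l.1 ≠ 0),
          d (l, q) • u l q)
      + ∑ q : Fin n, d (⟨0, hpos⟩, q) • u ⟨0, hpos⟩ q := by
  unfold stmt13E
  rw [add_assoc]
  congr 1
  rw [Fintype.sum_prod_type_right]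
  have hset0 : univ.filter (fun l : Fin n => ¬ l.1 ≠ 0) = {(⟨0, hpos⟩ : Fin n)} := by
    ext l; simp [Fin.ext_iff]
  have : ∀ q : Fin n, ∑ l : Fin n, d (l, q) • u l q
      = (∑ l ∈ univ.filter (fun l : Fin n => l.1 ≠ 0), d (l, q) • u l q)
        + d (⟨0, hpos⟩, q) • u ⟨0, hpos⟩ q := by
    intro q
    rw [← Finset.sum_filter_add_sum_filter_not univ (fun l : Fin n => l.1 ≠ 0)
      (fun l => d (l, q) • u l q), hset0, Finset.sum_singleton]
  rw [Finset.sum_congr rfl (fun q _ => this q), Finset.sum_add_distrib]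

def stmt13D {n : ℕ} (ζ : ℂ) (fb : (Fin n → ZMod n) × (Fin n → ℂ))
    (p : Fin n × Fin n) : ℂ :=
  if p.1.1 = 0 then fb.2 p.2 else ζ ^ (p.1.1 * (fb.1 p.2).val) - 1

end Stmt13Aux

set_option maxHeartbeats 1000000 in
theorem stmt13 (n : ℕ) (hn : 2 ≤ n) (ζ : ℂ)
    (hζ : ζ = Complex.exp (2 * Real.pi * Complex.I / n))
    (A : Type*) [CommRing A] [Algebra ℂ A]
    (u : Fin n → Fin n → A)
    (hmul : ∀ (l q l' q' : Fin n), (l.1 ≠ 0 ∨ l'.1 ≠ 0) →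
      u l q * u l' q' = if l = l' ∧ q = q' then u l q else 0)
    (h0 : ∀ q q' : Fin n, u ⟨0, by omega⟩ q * u ⟨0, by omega⟩ q' = 0)
    (hind : LinearIndependent ℂ
      (fun p : Option (Fin n × Fin n) => p.elim (1 : A) (fun lq => u lq.1 lq.2)))
    (hspan : ⊤ ≤ Submodule.span ℂ
      (Set.range (fun p : Option (Fin n × Fin n) => p.elim (1 : A) (fun lq => u lq.1 lq.2))))
    (ψ : ℕ → (A →ₗ[ℂ] A))
    (hψ1 : ∀ k, ψ k 1 = 1)
    (hψ0 : ∀ k, ∀ q : Fin n, ψ k (u ⟨0, by omega⟩ q) = (k : ℂ) • u ⟨0, by omega⟩ q)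
    (hψl : ∀ k, ∀ l q : Fin n, l.1 ≠ 0 →
      ψ k (u l q) = ∑ s ∈ Finset.univ.filter (fun s : Fin n => k * s.1 % n = l.1), u s q)
    (Φ : (Fin n → ZMod n) × (Fin n → ℂ) → A)
    (hΦ : ∀ fb : (Fin n → ZMod n) × (Fin n → ℂ),
      Φ fb = 1 + (∑ q : Fin n, ∑ l ∈ Finset.univ.filter (fun l : Fin n => l.1 ≠ 0),
          (ζ ^ (l.1 * (fb.1 q).val) - 1) • u l q) +
        ∑ q : Fin n, fb.2 q • u ⟨0, by omega⟩ q) :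
    (∀ x y, Φ (x + y) = Φ x * Φ y) ∧ Function.Injective Φ ∧
      Set.range Φ = {L : A | IsUnit L ∧ ∀ k : ℕ, 1 ≤ k → L ^ k = ψ k L} := by
  have hpos : 0 < n := by omega
  haveI : NeZero n := ⟨by omega⟩
  have h0' : ∀ q q' : Fin n, u ⟨0, hpos⟩ q * u ⟨0, hpos⟩ q' = 0 := h0
  have hψ0' : ∀ k, ∀ q : Fin n, ψ k (u ⟨0, hpos⟩ q) = (k : ℂ) • u ⟨0, hpos⟩ q := hψ0
  have hprim : IsPrimitiveRoot ζ n := hζ ▸ Complex.isPrimitiveRoot_exp n (by omega)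
  have hzn : ζ ^ n = 1 := hprim.pow_eq_one
  have hpow : ∀ m : ℕ, ζ ^ m = ζ ^ (m % n) := by
    intro m
    conv_lhs => rw [← Nat.div_add_mod m n]
    rw [pow_add, pow_mul, hzn, one_pow, one_mul]
  -- Φ in E-form
  have hΦE : ∀ fb, Φ fb = stmt13E u 1 (stmt13D ζ fb) := by
    intro fb
    rw [hΦ, stmt13E_eq hpos, one_smul]
    congr 1
    congr 1
    · refine Finset.sum_congr rfl fun q _ => Finset.sum_congr rfl fun l hl => ?_
      rw [Finset.mem_filter] at hl
      simp [stmt13D, hl.2]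
  -- multiplicativity
  have part1 : ∀ x y, Φ (x + y) = Φ x * Φ y := by
    intro x y
    rw [hΦE, hΦE, hΦE, stmt13E_mul hpos hmul h0']
    congr 1
    · norm_num
    · funext p
      by_cases hp : p.1.1 = 0
      · simp [stmt13D, hp]
        ring
      · simp only [stmt13D, if_neg hp, Prod.fst_add, Prod.snd_add, Pi.add_apply]
        have key : ζ ^ (p.1.1 * ((x.1 p.2 + y.1 p.2)).val)
            = ζ ^ (p.1.1 * (x.1 p.2).val) * ζ ^ (p.1.1 * (y.1 p.2).val) := by
          rw [← pow_add, ← Nat.mul_add, ZMod.val_add,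
            hpow (p.1.1 * (((x.1 p.2).val + (y.1 p.2).val) % n)),
            hpow (p.1.1 * ((x.1 p.2).val + (y.1 p.2).val))]
          congr 1
          conv_lhs => rw [Nat.mul_mod, Nat.mod_mod_of_dvd _ dvd_rfl, ← Nat.mul_mod]
        rw [key, if_pos hp]
        ring
  -- injectivity
  have part2 : Function.Injective Φ := by
    intro x y hxy
    rw [hΦE, hΦE] at hxy
    obtain ⟨-, hd⟩ := stmt13E_inj hind hxy
    refine Prod.ext ?_ ?_
    · funext q
      have h1 := congrFun hd (⟨1, by omega⟩, q)
      simp only [stmt13D] at h1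
      rw [if_neg (by simp), if_neg (by simp)] at h1
      have h2 : ζ ^ ((1 : ℕ) * (x.1 q).val) = ζ ^ ((1 : ℕ) * (y.1 q).val) :=
        sub_left_inj.mp h1
      rw [one_mul, one_mul] at h2
      have := hprim.pow_inj (ZMod.val_lt _) (ZMod.val_lt _) h2
      exact ZMod.val_injective n this
    · funext q
      have h1 := congrFun hd (⟨0, hpos⟩, q)
      simpa [stmt13D] using h1
  refine ⟨part1, part2, ?_⟩
  -- the pow identity for Φ fb
  have hΦpow : ∀ fb, ∀ k : ℕ, 1 ≤ k → (Φ fb) ^ k = ψ k (Φ fb) := by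
    intro fb k hk
    rw [hΦE, stmt13E_pow hpos hmul h0', stmt13E_psi hpos ψ hψ1 hψ0' hψl, one_pow]
    congr 1
    funext p
    by_cases hp : p.1.1 = 0
    · rw [if_pos hp, if_pos hp, one_pow, mul_one]
    · rw [if_neg hp, if_neg hp]
      simp only [stmt13D, if_neg hp]
      have h1 : (1 : ℂ) + (ζ ^ (p.1.1 * (fb.1 p.2).val) - 1)
          = ζ ^ (p.1.1 * (fb.1 p.2).val) := by ring
      rw [h1, ← pow_mul]
      by_cases hk0 : (k * p.1.1) % n = 0
      · rw [dif_neg (by omega)]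
        have hdvd : n ∣ k * p.1.1 * (fb.1 p.2).val :=
          (Nat.dvd_of_mod_eq_zero hk0).mul_right _
        have he : p.1.1 * (fb.1 p.2).val * k = k * p.1.1 * (fb.1 p.2).val := by ring
        have hmod : (k * p.1.1 * (fb.1 p.2).val) % n = 0 :=
          Nat.mod_eq_zero_of_dvd hdvd
        rw [he, hpow, hmod, pow_zero, sub_self]
      · rw [dif_pos hk0, if_neg hk0]
        have hexp : ζ ^ (p.1.1 * (fb.1 p.2).val * k)
            = ζ ^ ((k * p.1.1) % n * (fb.1 p.2).val) := by
          rw [hpow (p.1.1 * (fb.1 p.2).val * k), hpow ((k * p.1.1) % n * (fb.1 p.2).val)]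
          congr 1
          have he : p.1.1 * (fb.1 p.2).val * k = k * p.1.1 * (fb.1 p.2).val := by ring
          rw [he]
          conv_rhs => rw [Nat.mul_mod, Nat.mod_mod_of_dvd _ dvd_rfl, ← Nat.mul_mod]
        rw [hexp]
  have hΦ0 : Φ 0 = 1 := by
    rw [hΦE]
    have : stmt13D ζ (0 : (Fin n → ZMod n) × (Fin n → ℂ)) = 0 := by
      funext p
      by_cases hp : p.1.1 = 0 <;> simp [stmt13D, hp]
    rw [this]
    unfold stmt13E
    simp
  ext L
  constructor
  · rintro ⟨fb, rfl⟩
    refine ⟨IsUnit.of_mul_eq_one (Φ (-fb)) ?_, hΦpow fb⟩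
    rw [← part1, add_neg_cancel, hΦ0]
  · rintro ⟨hunit, hL⟩
    obtain ⟨g, hg⟩ := (Submodule.mem_span_range_iff_exists_fun ℂ).1
      (hspan (Submodule.mem_top : L ∈ ⊤))
    have hLE : L = stmt13E u (g none) (fun p => g (some p)) := by
      rw [← hg, Fintype.sum_option]
      unfold stmt13E
      simp
    -- g none = 1
    have h2 := hL 2 (by omega)
    rw [hLE, stmt13E_pow hpos hmul h0', stmt13E_psi hpos ψ hψ1 hψ0' hψl] at h2
    obtain ⟨hc2, -⟩ := stmt13E_inj hind h2
    have hu0 : u ⟨0, hpos⟩ ⟨0, hpos⟩ ≠ 0 := by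
      have := hind.ne_zero (some ((⟨0, hpos⟩ : Fin n), (⟨0, hpos⟩ : Fin n)))
      simpa using this
    have hc0 : g none ≠ 0 := by
      intro h
      have hmu := stmt13E_mul_u0 hpos hmul h0' (g none) (fun p => g (some p)) ⟨0, hpos⟩
      rw [← hLE, h, zero_smul] at hmu
      exact hu0 (hunit.mul_left_cancel (by rw [hmu, mul_zero]))
    have hc1 : g none = 1 := by
      have : g none * g none = g none * 1 := by
        rw [mul_one, ← pow_two]; exact hc2
      exact mul_left_cancel₀ hc0 this
    rw [hc1] at hLE
    -- coefficient equations
    have hceq : ∀ k, 1 ≤ k → ∀ p : Fin n × Fin n, ¬ p.1.1 = 0 →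
        (1 + g (some p)) ^ k - 1 =
          (if h : (k * p.1.1) % n ≠ 0
            then g (some (⟨(k * p.1.1) % n, Nat.mod_lt _ hpos⟩, p.2)) else 0) := by
      intro k hk p hp
      have hLk := hL k hk
      rw [hLE, stmt13E_pow hpos hmul h0', stmt13E_psi hpos ψ hψ1 hψ0' hψl] at hLk
      obtain ⟨-, hdk⟩ := stmt13E_inj hind hLk
      have := congrFun hdk p
      rw [if_neg hp, if_neg hp, one_pow] at this
      exact this
    have hroot : ∀ q : Fin n, (1 + g (some (⟨1, by omega⟩, q))) ^ n = 1 := by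
      intro q
      have := hceq n (by omega) (⟨1, by omega⟩, q) (by simp)
      rw [dif_neg (by simp)] at this
      exact sub_eq_zero.mp this
    have hex : ∀ q : Fin n, ∃ m, m < n ∧ ζ ^ m = 1 + g (some (⟨1, by omega⟩, q)) := by
      intro q
      obtain ⟨i, hi, hie⟩ := hprim.eq_pow_of_pow_eq_one (hroot q)
      exact ⟨i, hi, hie⟩
    choose m hm hme using hex
    refine ⟨((fun q => (m q : ZMod n)), fun q => g (some (⟨0, hpos⟩, q))), ?_⟩
    rw [hΦE, hLE]
    congr 1
    funext p
    by_cases hp : p.1.1 = 0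
    · simp only [stmt13D, if_pos hp]
      have hp1 : p = (⟨0, hpos⟩, p.2) := Prod.ext (Fin.ext hp) rfl
      rw [hp1]
    · simp only [stmt13D, if_neg hp]
      have hval : ((m p.2 : ZMod n)).val = m p.2 := ZMod.val_natCast_of_lt (hm p.2)
      rw [hval]
      have hc := hceq p.1.1 (by omega) (⟨1, by omega⟩, p.2) (by simp)
      simp only at hc
      rw [mul_one] at hc
      rw [dif_pos (by rw [Nat.mod_eq_of_lt p.1.2]; exact hp)] at hc
      have hfin : (⟨p.1.1 % n, Nat.mod_lt _ hpos⟩ : Fin n) = p.1 :=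
        Fin.ext (Nat.mod_eq_of_lt p.1.2)
      rw [hfin] at hc
      have : (1 + g (some (⟨1, by omega⟩, p.2))) = ζ ^ (m p.2) := (hme p.2).symm
      rw [this, ← pow_mul, mul_comm (m p.2) p.1.1] at hc
      rw [← hc]
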